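/- Let P₁ be a nonzero bounded projection on a Banach space X with I − P₁ nonzero, and let C₁, C₂ be the ranges of P₁ and I − P₁. Define the angular distance γ(C₁,C₂) = inf{ ‖ξ₁/‖ξ₁‖ − ξ₂/‖ξ₂‖ ‖ : ξ₁ ∈ C₁∖{0}, ξ₂ ∈ C₂∖{0} }. Then 1/γ(C₁,C₂) ≤ ‖P₁‖ ≤ 2/γ(C₁,C₂). -/
import Mathlib

lemma key_norm_ineq {X : Type*} [NormedAddCommGroup X] [NormedSpace ℝ X]
    (a b : X) (ha : a ≠ 0) (hb : b ≠ 0) :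
    ‖‖a‖⁻¹ • a - ‖b‖⁻¹ • b‖ ≤ 2 * ‖a - b‖ / ‖a‖ := by
  have hs : (0:ℝ) < ‖a‖ := norm_pos_iff.mpr ha
  have ht : (0:ℝ) < ‖b‖ := norm_pos_iff.mpr hb
  have heq : ‖a‖⁻¹ • a - ‖b‖⁻¹ • b = ‖a‖⁻¹ • (a - b) + (‖a‖⁻¹ - ‖b‖⁻¹) • b := by
    rw [smul_sub, sub_smul]; abel
  have habs : |‖b‖ - ‖a‖| ≤ ‖a - b‖ := by
    calc |‖b‖ - ‖a‖| ≤ ‖b - a‖ := abs_norm_sub_norm_le b a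
      _ = ‖a - b‖ := norm_sub_rev b a
  have h2 : |‖a‖⁻¹ - ‖b‖⁻¹| * ‖b‖ ≤ ‖a - b‖ / ‖a‖ := by
    have : ‖a‖⁻¹ - ‖b‖⁻¹ = (‖b‖ - ‖a‖) / (‖a‖ * ‖b‖) := by field_simp
    rw [this, abs_div, abs_of_pos (by positivity : (0:ℝ) < ‖a‖ * ‖b‖)]
    rw [div_mul_eq_mul_div, div_le_div_iff₀ (by positivity) hs]
    calc |‖b‖ - ‖a‖| * ‖b‖ * ‖a‖ ≤ ‖a - b‖ * ‖b‖ * ‖a‖ := by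
          apply mul_le_mul_of_nonneg_right (mul_le_mul_of_nonneg_right habs ht.le) hs.le
      _ = ‖a - b‖ * (‖a‖ * ‖b‖) := by ring
  rw [heq]
  calc ‖‖a‖⁻¹ • (a - b) + (‖a‖⁻¹ - ‖b‖⁻¹) • b‖
      ≤ ‖‖a‖⁻¹ • (a - b)‖ + ‖(‖a‖⁻¹ - ‖b‖⁻¹) • b‖ := norm_add_le _ _
    _ = ‖a‖⁻¹ * ‖a - b‖ + |‖a‖⁻¹ - ‖b‖⁻¹| * ‖b‖ := by
        rw [norm_smul, norm_smul, Real.norm_eq_abs, Real.norm_eq_abs,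
          abs_of_pos (inv_pos.mpr hs)]
    _ ≤ ‖a - b‖ / ‖a‖ + ‖a - b‖ / ‖a‖ := by
        rw [inv_mul_eq_div]; exact add_le_add le_rfl h2
    _ = 2 * ‖a - b‖ / ‖a‖ := by ring

theorem stmt_12 (X : Type*) [NormedAddCommGroup X] [NormedSpace ℝ X] [CompleteSpace X]
    (P : X →L[ℝ] X) (hP : ∀ x, P (P x) = P x)
    (hP0 : P ≠ 0) (hP1 : ContinuousLinearMap.id ℝ X - P ≠ 0)
    (γ : ℝ)
    (hγ : γ = sInf {d : ℝ | ∃ ξ₁ ξ₂ : X, ξ₁ ∈ Set.range P ∧ ξ₁ ≠ 0 ∧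
        ξ₂ ∈ Set.range (ContinuousLinearMap.id ℝ X - P) ∧ ξ₂ ≠ 0 ∧
        d = ‖‖ξ₁‖⁻¹ • ξ₁ - ‖ξ₂‖⁻¹ • ξ₂‖}) :
    1 / γ ≤ ‖P‖ ∧ ‖P‖ ≤ 2 / γ := by
  set S := {d : ℝ | ∃ ξ₁ ξ₂ : X, ξ₁ ∈ Set.range P ∧ ξ₁ ≠ 0 ∧
      ξ₂ ∈ Set.range (ContinuousLinearMap.id ℝ X - P) ∧ ξ₂ ≠ 0 ∧
      d = ‖‖ξ₁‖⁻¹ • ξ₁ - ‖ξ₂‖⁻¹ • ξ₂‖} with hS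
  have hQapp : ∀ y : X, (ContinuousLinearMap.id ℝ X - P) y = y - P y := by
    intro y; simp
  have hPQ : ∀ y : X, P ((ContinuousLinearMap.id ℝ X - P) y) = 0 := by
    intro y; rw [hQapp, map_sub, hP, sub_self]
  have hPnorm : (0:ℝ) < ‖P‖ := by
    rcases eq_or_lt_of_le (norm_nonneg P) with h | h
    · exact absurd (norm_eq_zero.mp h.symm) hP0
    · exact h
  -- every element of S is ≥ 1/‖P‖
  have hlb : ∀ d ∈ S, 1 / ‖P‖ ≤ d := by
    rintro d ⟨ξ₁, ξ₂, ⟨a, ha⟩, h1, ⟨b, hb⟩, h2, rfl⟩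
    have hξ1 : P ξ₁ = ξ₁ := by rw [← ha, hP]
    have hξ2 : P ξ₂ = 0 := by rw [← hb]; exact hPQ b
    have hn1 : (0:ℝ) < ‖ξ₁‖ := norm_pos_iff.mpr h1
    have hkey : (1:ℝ) ≤ ‖P‖ * ‖‖ξ₁‖⁻¹ • ξ₁ - ‖ξ₂‖⁻¹ • ξ₂‖ := by
      have := P.le_opNorm (‖ξ₁‖⁻¹ • ξ₁ - ‖ξ₂‖⁻¹ • ξ₂)
      rw [map_sub, map_smul, map_smul, hξ1, hξ2, smul_zero, sub_zero] at this
      calc (1:ℝ) = ‖‖ξ₁‖⁻¹ • ξ₁‖ := by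
            rw [norm_smul, Real.norm_eq_abs, abs_of_pos (inv_pos.mpr hn1),
              inv_mul_cancel₀ hn1.ne']
        _ ≤ _ := this
    rw [div_le_iff₀ hPnorm, mul_comm]
    exact hkey
  -- S is nonempty
  obtain ⟨a₀, ha₀⟩ : ∃ a : X, P a ≠ 0 := by
    by_contra h; push_neg at h
    exact hP0 (ContinuousLinearMap.ext fun x => by simp [h x])
  obtain ⟨b₀, hb₀⟩ : ∃ b : X, (ContinuousLinearMap.id ℝ X - P) b ≠ 0 := by
    by_contra h; push_neg at h
    exact hP1 (ContinuousLinearMap.ext fun x => by simp [h x])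
  have hmem0 : ‖‖P a₀‖⁻¹ • (P a₀) - ‖(ContinuousLinearMap.id ℝ X - P) b₀‖⁻¹ •
      ((ContinuousLinearMap.id ℝ X - P) b₀)‖ ∈ S :=
    ⟨P a₀, (ContinuousLinearMap.id ℝ X - P) b₀, ⟨a₀, rfl⟩, ha₀, ⟨b₀, rfl⟩, hb₀, rfl⟩
  have hne : S.Nonempty := ⟨_, hmem0⟩
  have hbdd : BddBelow S := ⟨1 / ‖P‖, fun d hd => hlb d hd⟩
  have hγlb : 1 / ‖P‖ ≤ γ := hγ ▸ le_csInf hne hlb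
  have hγpos : 0 < γ := lt_of_lt_of_le (by positivity) hγlb
  constructor
  · -- 1/γ ≤ ‖P‖
    rw [div_le_iff₀ hγpos]
    rw [div_le_iff₀ hPnorm] at hγlb
    linarith [mul_comm γ ‖P‖]
  · -- ‖P‖ ≤ 2/γ
    have hγ2 : γ ≤ 2 := by
      have h1 : γ ≤ ‖‖P a₀‖⁻¹ • (P a₀) - ‖(ContinuousLinearMap.id ℝ X - P) b₀‖⁻¹ •
          ((ContinuousLinearMap.id ℝ X - P) b₀)‖ := hγ ▸ csInf_le hbdd hmem0
      have h2 : ‖‖P a₀‖⁻¹ • (P a₀) - ‖(ContinuousLinearMap.id ℝ X - P) b₀‖⁻¹ •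
          ((ContinuousLinearMap.id ℝ X - P) b₀)‖ ≤ 2 := by
        have hn1 : (0:ℝ) < ‖P a₀‖ := norm_pos_iff.mpr ha₀
        have hn2 : (0:ℝ) < ‖(ContinuousLinearMap.id ℝ X - P) b₀‖ := norm_pos_iff.mpr hb₀
        calc _ ≤ ‖‖P a₀‖⁻¹ • (P a₀)‖ + ‖‖(ContinuousLinearMap.id ℝ X - P) b₀‖⁻¹ •
              ((ContinuousLinearMap.id ℝ X - P) b₀)‖ := norm_sub_le _ _
          _ = 1 + 1 := by
              rw [norm_smul, norm_smul, Real.norm_eq_abs, Real.norm_eq_abs,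
                abs_of_pos (inv_pos.mpr hn1), abs_of_pos (inv_pos.mpr hn2),
                inv_mul_cancel₀ hn1.ne', inv_mul_cancel₀ hn2.ne']
          _ = 2 := by norm_num
      linarith
    apply P.opNorm_le_bound (by positivity)
    intro x
    by_cases hx1 : P x = 0
    · rw [hx1, norm_zero]; positivity
    by_cases hx2 : x - P x = 0
    · have : P x = x := by rw [sub_eq_zero] at hx2; exact hx2.symm
      rw [this]
      have h21 : (1:ℝ) ≤ 2 / γ := (one_le_div hγpos).mpr hγ2
      nlinarith [norm_nonneg x]
    · -- main case
      set b : X := P x - x with hbdef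
      have hbne : b ≠ 0 := by
        intro h; apply hx2
        rw [hbdef] at h
        rw [← neg_eq_zero]; rw [neg_sub]; exact h
      have hbrange : b ∈ Set.range (ContinuousLinearMap.id ℝ X - P) := by
        refine ⟨-x, ?_⟩
        rw [hQapp, map_neg]; rw [hbdef]; abel
      have hmem : ‖‖P x‖⁻¹ • (P x) - ‖b‖⁻¹ • b‖ ∈ S :=
        ⟨P x, b, ⟨x, rfl⟩, hx1, hbrange, hbne, rfl⟩
      have h1 : γ ≤ ‖‖P x‖⁻¹ • (P x) - ‖b‖⁻¹ • b‖ := hγ ▸ csInf_le hbdd hmem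
      have h2 : ‖‖P x‖⁻¹ • (P x) - ‖b‖⁻¹ • b‖ ≤ 2 * ‖P x - b‖ / ‖P x‖ :=
        key_norm_ineq (P x) b hx1 hbne
      have h3 : P x - b = x := by rw [hbdef]; abel
      rw [h3] at h2
      have hnPx : (0:ℝ) < ‖P x‖ := norm_pos_iff.mpr hx1
      have h4 : γ ≤ 2 * ‖x‖ / ‖P x‖ := le_trans h1 h2
      rw [le_div_iff₀ hnPx] at h4
      rw [div_mul_eq_mul_div, le_div_iff₀ hγpos]
      nlinarith
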